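/- Let λ be its own core: λ_1 = ... = λ_{k-1} = k and λ_i = i+1 for k ≤ i ≤ n, with k < n. With respect to the reverse lexicographic order with x_1 < ... < x_n, reduction of a monomial M modulo the reduced Gröbner basis {h_k(x_1), h_{k-1}(x_1,x_2), ..., h_2(x_1,...,x_{k-1}), x_k h_1(x_1,...,x_k), ..., x_n h_1(x_1,...,x_n)} of I_λ satisfies: (1) if k ≤ i ≤ n and x_i divides M, then x_i divides every monomial of the normal form of M; (2) if M is divisible by none of x_k,...,x_n, then the same is true of every monomial of its normal form. -/

import Mathlib

open MvPolynomial Finset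

/-- The set of the first `j` variables among `x_0, ..., x_{n-1}`. -/
def fv (n j : ℕ) : Finset (Fin n) := Finset.univ.filter (fun i => (i : ℕ) < j)

/-- Complete homogeneous symmetric polynomial of degree `m` in the variables indexed by `S`. -/
noncomputable def hh (R : Type*) [CommRing R] (n m : ℕ) (S : Finset (Fin n)) :
    MvPolynomial (Fin n) R :=
  ∑ s ∈ S.sym m, ((s : Multiset (Fin n)).map (X : Fin n → MvPolynomial (Fin n) R)).prod

/-- Elementary symmetric polynomial of degree `m` in the variables indexed by `S`. -/
noncomputable def ee (R : Type*) [CommRing R] (n m : ℕ) (S : Finset (Fin n)) :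
    MvPolynomial (Fin n) R :=
  ∑ s ∈ S.powersetCard m, ∏ i ∈ s, X i

section AuxStickiness
open Polynomial
variable {R : Type*} [CommRing R]

/-- Coefficients in an ideal are preserved by `%ₘ`. -/
lemma coeff_modByMonic_mem {A : Type*} [CommRing A] (J : Ideal A) {h : A[X]}
    (y : A[X]) (hy : ∀ t, y.coeff t ∈ J) : ∀ s, (y %ₘ h).coeff s ∈ J := by
  intro s
  rw [show y %ₘ h = (∑ i ∈ y.support, Polynomial.monomial i (y.coeff i)) %ₘ h by rw [← y.as_sum_support]]
  have : (∑ i ∈ y.support, Polynomial.monomial i (y.coeff i)) %ₘ h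
      = ∑ i ∈ y.support, (Polynomial.monomial i (y.coeff i)) %ₘ h :=
    map_sum (Polynomial.modByMonicHom h) _ _
  rw [this, Polynomial.finset_sum_coeff]
  refine Ideal.sum_mem _ fun i _ => ?_
  have : (Polynomial.monomial i (y.coeff i)) %ₘ h
      = y.coeff i • (((Polynomial.X : A[X]) ^ i) %ₘ h) := by
    rw [← smul_modByMonic, Polynomial.smul_X_eq_monomial]
  rw [this, Polynomial.coeff_smul, smul_eq_mul]
  exact Ideal.mul_mem_right _ _ (hy i)

lemma indep [Nontrivial R] : ∀ (m : ℕ) (g : Fin m → MvPolynomial (Fin m) R) (D : Fin m → ℕ),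
    (∀ j, 1 ≤ D j) →
    (∀ j, ∃ r, g j = (MvPolynomial.X j) ^ D j + r ∧ degreeOf j r < D j ∧
        ∀ i : Fin m, (j : ℕ) < (i : ℕ) → degreeOf i (g j) = 0) →
    ∀ P ∈ Ideal.span (Set.range g), (∀ j, degreeOf j P < D j) → P = 0 := by
  intro m
  induction m with
  | zero =>
    intro g D _ _ P hP _
    rw [Set.range_eq_empty, Ideal.span_empty] at hP
    simpa using hP
  | succ m IH =>
    intro g D hD1 hg P hP hPd
    set E : MvPolynomial (Fin (m + 1)) R ≃ₐ[R] Polynomial (MvPolynomial (Fin m) R) :=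
      (renameEquiv R (finRotate (m + 1))).trans (MvPolynomial.finSuccEquiv R m) with hE
    have hrot : Function.Injective (finRotate (m + 1)) := (finRotate (m + 1)).injective
    have EX_last : E (MvPolynomial.X (Fin.last m)) = Polynomial.X := by
      simp [hE, rename_X, finRotate_last, finSuccEquiv_X_zero]
    have EX_cast : ∀ j : Fin m, E (MvPolynomial.X j.castSucc) = Polynomial.C (MvPolynomial.X j) := by
      intro j
      simp [hE, rename_X, Fin.coeSucc_eq_succ, finSuccEquiv_X_succ]
    have natDegE : ∀ P : MvPolynomial (Fin (m + 1)) R,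
        (E P).natDegree = degreeOf (Fin.last m) P := by
      intro P
      have h0 : degreeOf (finRotate (m+1) (Fin.last m)) (rename (finRotate (m+1)) P)
          = degreeOf (Fin.last m) P := degreeOf_rename_of_injective hrot _
      rw [finRotate_last] at h0
      simpa [hE, natDegree_finSuccEquiv] using h0
    have coeffE : ∀ (P : MvPolynomial (Fin (m + 1)) R) (j : Fin m) (t : ℕ),
        degreeOf j ((E P).coeff t) ≤ degreeOf j.castSucc P := by
      intro P j t
      have h1 := degreeOf_coeff_finSuccEquiv (rename (finRotate (m+1)) P) j t
      have h0 : degreeOf (finRotate (m+1) j.castSucc) (rename (finRotate (m+1)) P)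
          = degreeOf j.castSucc P := degreeOf_rename_of_injective hrot _
      rw [finRotate_succ_apply, Fin.coeSucc_eq_succ] at h0
      rw [← h0]
      exact h1
    -- the restricted generator family
    set q : Fin m → MvPolynomial (Fin m) R := fun j => ((E (g j.castSucc)).coeff 0) with hq
    have hCq : ∀ j : Fin m, E (g j.castSucc) = Polynomial.C (q j) := by
      intro j
      obtain ⟨r, hgj, hr, hvars⟩ := hg j.castSucc
      have : (E (g j.castSucc)).natDegree = 0 := by
        rw [natDegE, hvars (Fin.last m) (by simpa using j.is_lt)]
      exact eq_C_of_natDegree_le_zero this.le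
    obtain ⟨r, hgl, hrl, _⟩ := hg (Fin.last m)
    set Dl := D (Fin.last m) with hDl
    have degEr : (E r).degree < (Dl : WithBot ℕ) := by
      rcases eq_or_ne (E r) 0 with h0 | h0
      · rw [h0, Polynomial.degree_zero]
        exact WithBot.bot_lt_coe _
      · rw [Polynomial.degree_eq_natDegree h0]
        exact_mod_cast lt_of_le_of_lt (le_of_eq (natDegE r)) hrl
    set h : Polynomial (MvPolynomial (Fin m) R) := E (g (Fin.last m)) with hh'
    have hEh : h = Polynomial.X ^ Dl + E r := by
      rw [hh', hgl, map_add, map_pow, EX_last]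
    have hmonic : h.Monic := by
      rw [hEh]; exact Polynomial.monic_X_pow_add degEr
    have hdeg : h.degree = (Dl : WithBot ℕ) := by
      rw [hEh, Polynomial.degree_add_eq_left_of_degree_lt, Polynomial.degree_X_pow]
      rwa [Polynomial.degree_X_pow]
    set J : Ideal (MvPolynomial (Fin m) R) := Ideal.span (Set.range q) with hJ
    -- every element of the span has a canonical division form
    have key : ∀ x ∈ Ideal.span ({h} ∪ Set.range fun j => Polynomial.C (q j) :
        Set (Polynomial (MvPolynomial (Fin m) R))),
        ∃ u v, x = h * u + v ∧ v.degree < h.degree ∧ ∀ t, v.coeff t ∈ J := by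
      intro x hx
      refine Submodule.span_induction ?_ ?_ ?_ ?_ hx
      · rintro y (rfl | ⟨j, rfl⟩)
        · exact ⟨1, 0, by ring, by simp only [Polynomial.degree_zero, hdeg]; exact WithBot.bot_lt_coe _, by simp⟩
        · refine ⟨0, Polynomial.C (q j), by ring, ?_, ?_⟩
          · apply lt_of_le_of_lt (Polynomial.degree_C_le)
            rw [hdeg]
            exact_mod_cast Nat.cast_lt.mpr (hD1 (Fin.last m))
          · intro t
            rcases eq_or_ne t 0 with rfl | ht
            · rw [Polynomial.coeff_C_zero]
              exact Ideal.subset_span ⟨j, rfl⟩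
            · rw [Polynomial.coeff_C, if_neg ht]
              exact J.zero_mem
      · exact ⟨0, 0, by ring, by simp only [Polynomial.degree_zero, hdeg]; exact WithBot.bot_lt_coe _, by simp⟩
      · rintro x y - - ⟨u₁, v₁, rfl, hd₁, hc₁⟩ ⟨u₂, v₂, rfl, hd₂, hc₂⟩
        refine ⟨u₁ + u₂, v₁ + v₂, by ring, ?_, ?_⟩
        · exact lt_of_le_of_lt (Polynomial.degree_add_le _ _) (max_lt hd₁ hd₂)
        · intro t; rw [Polynomial.coeff_add]; exact J.add_mem (hc₁ t) (hc₂ t)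
      · rintro f x - ⟨u, v, rfl, hd, hc⟩
        have hfv : ∀ t, (f * v).coeff t ∈ J := by
          intro t
          rw [Polynomial.coeff_mul]
          exact Ideal.sum_mem _ fun p _ => Ideal.mul_mem_left _ _ (hc p.2)
        refine ⟨f * u + (f * v) /ₘ h, (f * v) %ₘ h, ?_, ?_, ?_⟩
        · have := Polynomial.modByMonic_add_div (f * v) h
          simp only [smul_eq_mul]
          ring_nf
          linear_combination (norm := ring_nf) -this
        · exact Polynomial.degree_modByMonic_lt _ hmonic
        · exact coeff_modByMonic_mem J _ hfv
    -- transport P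
    have hEP : E P ∈ Ideal.span ({h} ∪ Set.range fun j => Polynomial.C (q j) :
        Set (Polynomial (MvPolynomial (Fin m) R))) := by
      have h1 : E P ∈ Ideal.map (E : MvPolynomial (Fin (m+1)) R →+* _) (Ideal.span (Set.range g)) :=
        Ideal.mem_map_of_mem _ hP
      rw [Ideal.map_span] at h1
      refine Ideal.span_mono ?_ h1
      rintro y ⟨y', ⟨j, rfl⟩, rfl⟩
      refine Fin.lastCases ?_ ?_ j
      · exact Or.inl rfl
      · intro i
        exact Or.inr ⟨i, (hCq i).symm⟩
    obtain ⟨u, v, hxuv, hvdeg, hvc⟩ := key _ hEP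
    rcases eq_or_ne (E P) 0 with hEP0 | hEP0
    · exact (map_eq_zero_iff E E.injective).mp hEP0
    have hdegEP : (E P).degree < h.degree := by
      rw [Polynomial.degree_eq_natDegree hEP0, hdeg]
      exact_mod_cast lt_of_le_of_lt (le_of_eq (natDegE P)) (hPd (Fin.last m))
    have hu : u = 0 := by
      by_contra hu0
      have h1 : (u * h).degree = u.degree + h.degree := hmonic.degree_mul
      have h2 : (h * u).degree < h.degree := by
        have : h * u = E P - v := by rw [hxuv]; ring
        rw [this]
        exact lt_of_le_of_lt (Polynomial.degree_sub_le _ _) (max_lt hdegEP hvdeg)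
      rw [mul_comm, h1] at h2
      have h3 : (0 : WithBot ℕ) ≤ u.degree := Polynomial.zero_le_degree_iff.mpr hu0
      have h4 := add_le_add h3 (le_refl h.degree)
      simp only [zero_add] at h4
      exact absurd h2 (not_lt.mpr h4)
    rw [hu, mul_zero, zero_add] at hxuv
    -- coefficients vanish by induction
    have hcz : ∀ t, (E P).coeff t = 0 := by
      intro t
      refine IH q (fun j => D j.castSucc) (fun j => hD1 _) ?_ _ ?_ ?_
      · intro j
        obtain ⟨rj, hgj, hrj, hvj⟩ := hg j.castSucc
        refine ⟨(E rj).coeff 0, ?_, ?_, ?_⟩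
        · show (E (g j.castSucc)).coeff 0 = _
          rw [hgj, map_add, map_pow, EX_cast, ← map_pow, Polynomial.coeff_add,
            Polynomial.coeff_C_zero]
        · exact lt_of_le_of_lt (coeffE rj j 0) hrj
        · intro i hij
          have h1 : degreeOf i (q j) ≤ degreeOf i.castSucc (g j.castSucc) := coeffE _ i 0
          have h2 : degreeOf i.castSucc (g j.castSucc) = 0 :=
            hvj i.castSucc (by simpa using hij)
          omega
      · rw [hxuv]; exact hvc t
      · intro j
        exact lt_of_le_of_lt (coeffE P j t) (hPd j.castSucc)
    exact (map_eq_zero_iff E E.injective).mp (Polynomial.ext fun t => by rw [hcz t, Polynomial.coeff_zero])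

open Finset in
lemma degreeOf_multiset_prod_X_le {n : ℕ} (i : Fin n) (s : Multiset (Fin n)) :
    degreeOf i ((s.map (X : Fin n → MvPolynomial (Fin n) ℤ)).prod) ≤ s.count i := by
  induction s using Multiset.induction_on with
  | empty =>
    rw [Multiset.map_zero, Multiset.prod_zero, Multiset.count_zero, Nat.le_zero,
      ← MvPolynomial.C_1]
    exact degreeOf_C 1 i
  | cons a s ih =>
    rw [Multiset.map_cons, Multiset.prod_cons, Multiset.count_cons]
    rcases eq_or_ne a i with h | hai
    · subst h
      have hX : degreeOf a (MvPolynomial.X a : MvPolynomial (Fin n) ℤ) = 1 := by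
        rw [degreeOf_X, if_pos rfl]
      refine le_trans (degreeOf_mul_le _ _ _) ?_
      rw [hX, if_pos rfl, add_comm]
      exact Nat.add_le_add_right ih 1
    · have hX : degreeOf i (MvPolynomial.X a : MvPolynomial (Fin n) ℤ) = 0 := by
        rw [degreeOf_X, if_neg (Ne.symm hai)]
      refine le_trans (degreeOf_mul_le _ _ _) ?_
      rw [hX, if_neg (Ne.symm hai), zero_add, add_zero]
      exact ih

open Finset in
lemma hh_struct {n : ℕ} (m : ℕ) (hm : 1 ≤ m) (j : Fin n) :
    ∃ r, hh ℤ n m (fv n ((j : ℕ) + 1)) = (X j) ^ m + r ∧ degreeOf j r < m ∧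
      ∀ i : Fin n, (j : ℕ) < (i : ℕ) → degreeOf i (hh ℤ n m (fv n ((j : ℕ) + 1))) = 0 := by
  have hjfv : j ∈ fv n ((j : ℕ) + 1) := by simp [fv]
  have hsym : (Sym.replicate m j) ∈ (fv n ((j : ℕ) + 1)).sym m := replicate_mem_sym hjfv m
  refine ⟨∑ s ∈ ((fv n ((j : ℕ) + 1)).sym m).erase (Sym.replicate m j),
      ((s : Multiset (Fin n)).map (X : Fin n → MvPolynomial (Fin n) ℤ)).prod, ?_, ?_, ?_⟩
  · rw [hh, ← Finset.add_sum_erase _ _ hsym]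
    congr 1
    rw [Sym.coe_replicate, Multiset.map_replicate, Multiset.prod_replicate]
  · refine lt_of_le_of_lt (degreeOf_sum_le _ _ _) ?_
    rw [Finset.sup_lt_iff (by simpa using Nat.lt_of_lt_of_le Nat.zero_lt_one hm)]
    intro s hs
    rw [Finset.mem_erase] at hs
    refine lt_of_le_of_lt (degreeOf_multiset_prod_X_le _ _) ?_
    have hle : Multiset.count j (s : Multiset (Fin n)) ≤ m := by
      exact (Multiset.count_le_card _ _).trans (le_of_eq Sym.card_coe)
    rcases lt_or_eq_of_le hle with h | h
    · exact h
    · exfalso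
      apply hs.1
      rw [Sym.eq_replicate]
      intro b hb
      have := Multiset.count_eq_card.mp (by rw [h, Sym.card_coe])
      exact (this b hb).symm
  · intro i hij
    refine Nat.le_zero.mp (le_trans (degreeOf_sum_le _ _ _) ?_)
    rw [Finset.sup_le_iff]
    intro s hs
    refine le_trans (degreeOf_multiset_prod_X_le _ _) ?_
    rw [Nat.le_zero, Multiset.count_eq_zero]
    intro hi
    have := Finset.mem_sym_iff.mp hs i hi
    simp only [fv, Finset.mem_filter] at this
    omega

open Finset in
lemma sticky_struct {n : ℕ} (j : Fin n) (T : Finset (Fin n)) (hjT : j ∈ T)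
    (hT : ∀ t ∈ T, (t : ℕ) ≤ (j : ℕ)) :
    ∃ r, (X j : MvPolynomial (Fin n) ℤ) * (∑ t ∈ T, X t) = (X j) ^ 2 + r ∧
      degreeOf j r < 2 ∧
      ∀ i : Fin n, (j : ℕ) < (i : ℕ) →
        degreeOf i ((X j : MvPolynomial (Fin n) ℤ) * (∑ t ∈ T, X t)) = 0 := by
  refine ⟨(X j : MvPolynomial (Fin n) ℤ) * ∑ t ∈ T.erase j, X t, ?_, ?_, ?_⟩
  · rw [← Finset.add_sum_erase _ _ hjT, mul_add, sq]
  · refine lt_of_le_of_lt (degreeOf_mul_le _ _ _) ?_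
    have h1 : degreeOf j (X j : MvPolynomial (Fin n) ℤ) = 1 := by
      rw [degreeOf_X, if_pos rfl]
    have h2 : degreeOf j (∑ t ∈ T.erase j, (X t : MvPolynomial (Fin n) ℤ)) = 0 := by
      refine Nat.le_zero.mp (le_trans (degreeOf_sum_le _ _ _) ?_)
      rw [Finset.sup_le_iff]
      intro t ht
      rw [degreeOf_X, if_neg (Ne.symm (Finset.mem_erase.mp ht).1)]
    omega
  · intro i hij
    have hi0 : ∀ t ∈ T, degreeOf i (X t : MvPolynomial (Fin n) ℤ) = 0 := by
      intro t ht
      rw [degreeOf_X, if_neg]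
      intro h; subst h; exact absurd (hT _ ht) (by omega)
    refine Nat.le_zero.mp (le_trans (degreeOf_mul_le _ _ _) ?_)
    have h1 : degreeOf i (X j : MvPolynomial (Fin n) ℤ) = 0 := by
      rw [degreeOf_X, if_neg]; intro h; subst h; omega
    have h2 : degreeOf i (∑ t ∈ T, (X t : MvPolynomial (Fin n) ℤ)) = 0 := by
      refine Nat.le_zero.mp (le_trans (degreeOf_sum_le _ _ _) ?_)
      rw [Finset.sup_le_iff]
      intro t ht
      rw [hi0 t ht]
    omega

open Finset in
lemma hh_one {n : ℕ} (S : Finset (Fin n)) :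
    hh ℤ n 1 S = ∑ t ∈ S, MvPolynomial.X t := by
  rw [hh]
  refine (Finset.sum_bij (fun (a : Fin n) (_ : a ∈ S) => Sym.replicate 1 a) ?_ ?_ ?_ ?_).symm
  · intro a ha
    exact replicate_mem_sym ha 1
  · intro a ha b hb hab
    have := congrArg (fun s : Sym (Fin n) 1 => (s : Multiset (Fin n))) hab
    simp only [Sym.coe_replicate, Multiset.replicate_one] at this
    exact Multiset.singleton_inj.mp this
  · intro s hs
    obtain ⟨a, ha⟩ := Multiset.card_eq_one.mp (Sym.card_coe (s := s))
    have haS : a ∈ S := by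
      refine Finset.mem_sym_iff.mp hs a ?_
      show a ∈ (s : Multiset (Fin n))
      rw [ha]; exact Multiset.mem_singleton_self a
    refine ⟨a, haS, Sym.coe_injective ?_⟩
    rw [Sym.coe_replicate, Multiset.replicate_one, ha]
  · intro a ha
    rw [Sym.coe_replicate, Multiset.map_replicate, Multiset.prod_replicate, pow_one]

lemma aeval_hh {n : ℕ} (m : ℕ) (S : Finset (Fin n)) (f : Fin n → MvPolynomial (Fin n) ℤ)
    (hf : ∀ t ∈ S, f t = MvPolynomial.X t) :
    MvPolynomial.aeval f (hh ℤ n m S) = hh ℤ n m S := by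
  rw [hh, map_sum]
  refine Finset.sum_congr rfl fun s hs => ?_
  rw [map_multiset_prod, Multiset.map_map]
  congr 1
  refine Multiset.map_congr rfl fun t ht => ?_
  show MvPolynomial.aeval f (MvPolynomial.X t) = MvPolynomial.X t
  rw [MvPolynomial.aeval_X]
  exact hf t (Finset.mem_sym_iff.mp hs t ht)

lemma aeval_monomial_keep {n : ℕ} (f : Fin n → MvPolynomial (Fin n) ℤ) (d : Fin n →₀ ℕ)
    (h : ∀ t ∈ d.support, f t = MvPolynomial.X t) :
    MvPolynomial.aeval f (monomial d (1 : ℤ)) = monomial d 1 := by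
  rw [MvPolynomial.aeval_monomial, MvPolynomial.monomial_eq, MvPolynomial.C_1, map_one]
  congr 1
  exact Finsupp.prod_congr fun t ht => by rw [h t ht]

lemma aeval_monomial_kill {n : ℕ} (f : Fin n → MvPolynomial (Fin n) ℤ) (d : Fin n →₀ ℕ)
    (i : Fin n) (hi : d i ≠ 0) (hfi : f i = 0) :
    MvPolynomial.aeval f (monomial d (1 : ℤ)) = 0 := by
  rw [MvPolynomial.aeval_monomial]
  have : (d.prod fun t e => f t ^ e) = 0 := by
    refine Finset.prod_eq_zero (Finsupp.mem_support_iff.mpr hi) ?_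
    show f i ^ d i = 0
    rw [hfi]
    exact zero_pow hi
  rw [this, mul_zero]

lemma aeval_filter {n : ℕ} (f : Fin n → MvPolynomial (Fin n) ℤ) (p : (Fin n →₀ ℕ) → Prop)
    [DecidablePred p]
    (hkeep : ∀ d', p d' → MvPolynomial.aeval f (monomial d' (1 : ℤ)) = monomial d' 1)
    (hkill : ∀ d', ¬ p d' → MvPolynomial.aeval f (monomial d' (1 : ℤ)) = 0)
    (N : MvPolynomial (Fin n) ℤ) :
    MvPolynomial.aeval f N = ∑ d' ∈ N.support.filter p, monomial d' (N.coeff d') := by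
  conv_lhs => rw [N.as_sum]
  rw [map_sum, ← Finset.sum_filter_add_sum_filter_not N.support p]
  have h2 : ∀ d' ∈ N.support.filter (fun x => ¬ p x),
      MvPolynomial.aeval f (monomial d' (N.coeff d')) = 0 := by
    intro d' hd'
    have : monomial d' (N.coeff d') = (N.coeff d') • monomial d' (1 : ℤ) := by
      rw [MvPolynomial.smul_monomial, smul_eq_mul, mul_one]
    rw [this, map_smul, hkill d' (Finset.mem_filter.mp hd').2, smul_zero]
  rw [Finset.sum_eq_zero h2, add_zero]
  refine Finset.sum_congr rfl fun d' hd' => ?_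
  have : monomial d' (N.coeff d') = (N.coeff d') • monomial d' (1 : ℤ) := by
    rw [MvPolynomial.smul_monomial, smul_eq_mul, mul_one]
  rw [this, map_smul, hkeep d' (Finset.mem_filter.mp hd').2, ← this]

lemma support_filter_sum {n : ℕ} (p : (Fin n →₀ ℕ) → Prop) [DecidablePred p]
    (N : MvPolynomial (Fin n) ℤ) :
    (∑ d' ∈ N.support.filter p, monomial d' (N.coeff d')).support ⊆ N.support.filter p := by
  classical
  refine subset_trans MvPolynomial.support_sum ?_
  intro x hx
  rw [Finset.mem_biUnion] at hx
  obtain ⟨d', hd', hx⟩ := hx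
  have := MvPolynomial.support_monomial (a := N.coeff d') (h := Classical.dec _) ▸ hx
  rcases Classical.em (N.coeff d' = 0) with h0 | h0
  · rw [MvPolynomial.support_monomial, if_pos h0] at hx
    simp at hx
  · rw [MvPolynomial.support_monomial, if_neg h0] at hx
    rw [Finset.mem_singleton] at hx
    rwa [hx]

open Finset in
lemma aeval_span_le {n : ℕ} (f : Fin n → MvPolynomial (Fin n) ℤ)
    (G₁ G₂ : Fin n → MvPolynomial (Fin n) ℤ)
    (h : ∀ j, MvPolynomial.aeval f (G₁ j) ∈ Ideal.span (Set.range G₂)) :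
    ∀ x ∈ Ideal.span (Set.range G₁), MvPolynomial.aeval f x ∈ Ideal.span (Set.range G₂) := by
  intro x hx
  refine Submodule.span_induction ?_ ?_ ?_ ?_ hx
  · rintro y ⟨j, rfl⟩; exact h j
  · rw [map_zero]; exact Ideal.zero_mem _
  · intro a b _ _ ha hb; rw [map_add]; exact Ideal.add_mem _ ha hb
  · intro a b _ hb; rw [smul_eq_mul, map_mul]; exact Ideal.mul_mem_left _ _ hb

lemma coeff_filter_sum {n : ℕ} (p : (Fin n →₀ ℕ) → Prop) [DecidablePred p]
    (N : MvPolynomial (Fin n) ℤ) (dd : Fin n →₀ ℕ) :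
    MvPolynomial.coeff dd (∑ d'' ∈ N.support.filter p, MvPolynomial.monomial d'' (N.coeff d''))
      = if p dd then N.coeff dd else 0 := by
  classical
  by_cases hdd : p dd
  · rw [if_pos hdd]
    rw [MvPolynomial.coeff_sum]
    have hstep : ∑ d'' ∈ N.support.filter p,
        MvPolynomial.coeff dd (MvPolynomial.monomial d'' (N.coeff d''))
        = MvPolynomial.coeff dd (MvPolynomial.monomial dd (N.coeff dd)) := by
      refine Finset.sum_eq_single dd (fun b _ hb => ?_) (fun hnot => ?_)
      · rw [MvPolynomial.coeff_monomial, if_neg hb]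
      · rw [MvPolynomial.coeff_monomial, if_pos rfl]
        by_contra hc
        exact hnot (Finset.mem_filter.mpr ⟨MvPolynomial.mem_support_iff.mpr hc, hdd⟩)
    rw [hstep, MvPolynomial.coeff_monomial, if_pos rfl]
  · rw [if_neg hdd]
    rw [MvPolynomial.coeff_sum]
    refine Finset.sum_eq_zero fun b hb => ?_
    rw [MvPolynomial.coeff_monomial, if_neg]
    rintro rfl
    exact hdd (Finset.mem_filter.mp hb).2


end AuxStickiness

/-- "stickiness": let `λ` be its own core (`λ_1 = ... = λ_{k-1} = k`,
`λ_i = i + 1` for `k ≤ i ≤ n`, `k < n`). The normal form of a monomial `M` modulo the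
reduced Gröbner basis of `I_λ` — i.e. the unique polynomial `N` supported on standard
monomials (exponent of `x_j` at most `k - j` for `j ≤ k-1`, at most `1` for `j ≥ k`)
with `M ≡ N (mod I_λ)` — satisfies: (1) if `x_i` is sticky (`k ≤ i ≤ n`) and divides `M`,
then `x_i` divides every monomial of `N`; (2) if no sticky variable divides `M`, then no
sticky variable divides any monomial of `N`. (0-indexed variables; row `j' = j+1`.) -/
theorem stmt13 (n k : ℕ) (hk : 1 ≤ k) (hkn : k < n)
    (I : Ideal (MvPolynomial (Fin n) ℤ))
    (hI : I = Ideal.span (Set.range fun j : Fin n =>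
      if (j : ℕ) + 1 < k then hh ℤ n (k - (j : ℕ)) (fv n ((j : ℕ) + 1))
      else X j * hh ℤ n 1 (fv n ((j : ℕ) + 1))))
    (d : Fin n →₀ ℕ) (N : MvPolynomial (Fin n) ℤ)
    (hcong : (monomial d (1 : ℤ)) - N ∈ I)
    (hstd : ∀ d' ∈ N.support, ∀ j : Fin n,
      d' j ≤ if (j : ℕ) + 1 < k then k - ((j : ℕ) + 1) else 1) :
    (∀ i : Fin n, k ≤ (i : ℕ) + 1 → d i ≠ 0 → ∀ d' ∈ N.support, d' i ≠ 0) ∧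
    ((∀ i : Fin n, k ≤ (i : ℕ) + 1 → d i = 0) →
      ∀ d' ∈ N.support, ∀ i : Fin n, k ≤ (i : ℕ) + 1 → d' i = 0) := by
  classical
  subst hI
  set G : Fin n → MvPolynomial (Fin n) ℤ := fun j : Fin n =>
      if (j : ℕ) + 1 < k then hh ℤ n (k - (j : ℕ)) (fv n ((j : ℕ) + 1))
      else MvPolynomial.X j * hh ℤ n 1 (fv n ((j : ℕ) + 1)) with hG
  set D : Fin n → ℕ := fun j => if (j : ℕ) + 1 < k then k - (j : ℕ) else 2 with hD
  have hfvj : ∀ j : Fin n, j ∈ fv n ((j : ℕ) + 1) := fun j => by simp [fv]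
  have hfvle : ∀ (j t : Fin n), t ∈ fv n ((j : ℕ) + 1) → (t : ℕ) ≤ (j : ℕ) := by
    intro j t ht; simp only [fv, Finset.mem_filter] at ht; omega
  have hD1 : ∀ j, 1 ≤ D j := by intro j; simp only [hD]; split <;> omega
  have hGstruct : ∀ j, ∃ r, G j = MvPolynomial.X j ^ D j + r ∧ degreeOf j r < D j ∧
      ∀ i' : Fin n, (j : ℕ) < (i' : ℕ) → degreeOf i' (G j) = 0 := by
    intro j
    by_cases hj : (j : ℕ) + 1 < k
    · simpa only [hG, hD, if_pos hj] using hh_struct (k - (j : ℕ)) (by omega) j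
    · have := sticky_struct j (fv n ((j : ℕ) + 1)) (hfvj j) (hfvle j)
      rw [← hh_one] at this
      simpa only [hG, hD, if_neg hj] using this
  have hsupN : ∀ dd ∈ N.support, ∀ j : Fin n, dd j < D j := by
    intro dd hdd j
    have h1 := hstd dd hdd j
    simp only [hD]
    by_cases hj : (j : ℕ) + 1 < k
    · rw [if_pos hj] at h1 ⊢; omega
    · rw [if_neg hj] at h1 ⊢; omega
  constructor
  · -- Part 1
    intro i hik hdi d' hd'
    intro h0
    set f : Fin n → MvPolynomial (Fin n) ℤ :=
      fun t => if t = i then 0 else MvPolynomial.X t with hf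
    have hkeep : ∀ dd : Fin n →₀ ℕ, dd i = 0 →
        MvPolynomial.aeval f (MvPolynomial.monomial dd (1 : ℤ)) = MvPolynomial.monomial dd 1 := by
      intro dd hdd
      refine aeval_monomial_keep f dd fun t ht => ?_
      have hti : t ≠ i := by rintro rfl; exact (Finsupp.mem_support_iff.mp ht) hdd
      simp only [hf]; rw [if_neg hti]
    have hkill : ∀ dd : Fin n →₀ ℕ, ¬ (dd i = 0) →
        MvPolynomial.aeval f (MvPolynomial.monomial dd (1 : ℤ)) = 0 := by
      intro dd hdd
      exact aeval_monomial_kill f dd i hdd (by simp [hf])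
    have hfN := aeval_filter f (fun dd => dd i = 0) hkeep hkill N
    set G' : Fin n → MvPolynomial (Fin n) ℤ := fun j =>
      if (j : ℕ) + 1 < k then hh ℤ n (k - (j : ℕ)) (fv n ((j : ℕ) + 1))
      else if j = i then MvPolynomial.X i
      else MvPolynomial.X j * ∑ t ∈ (fv n ((j : ℕ) + 1)).erase i, MvPolynomial.X t with hG'
    set D' : Fin n → ℕ := fun j =>
      if (j : ℕ) + 1 < k then k - (j : ℕ) else if j = i then 1 else 2 with hD'
    have hD'1 : ∀ j, 1 ≤ D' j := by
      intro j; simp only [hD']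
      split
      · omega
      · split <;> omega
    have hGmap : ∀ j : Fin n, MvPolynomial.aeval f (G j) ∈ Ideal.span (Set.range G') := by
      intro j
      by_cases hj : (j : ℕ) + 1 < k
      · have heq : MvPolynomial.aeval f (G j) = G' j := by
          simp only [hG, hG', if_pos hj]
          refine aeval_hh _ _ _ fun t ht => ?_
          have hti : t ≠ i := by
            intro h; subst h
            have := hfvle j t ht
            omega
          simp only [hf]; rw [if_neg hti]
        rw [heq]; exact Ideal.subset_span ⟨j, rfl⟩
      · by_cases hji : j = i
        · subst hji
          have heq : MvPolynomial.aeval f (G j) = 0 := by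
            simp only [hG, if_neg hj]
            rw [map_mul, MvPolynomial.aeval_X]
            have : f j = 0 := by simp [hf]
            rw [this, zero_mul]
          rw [heq]; exact Ideal.zero_mem _
        · have heq : MvPolynomial.aeval f (G j) = G' j := by
            simp only [hG, hG', if_neg hj, if_neg hji]
            rw [map_mul, MvPolynomial.aeval_X, hh_one, map_sum]
            have hsum : ∑ t ∈ fv n ((j : ℕ) + 1),
                MvPolynomial.aeval f (MvPolynomial.X t : MvPolynomial (Fin n) ℤ)
                = ∑ t ∈ (fv n ((j : ℕ) + 1)).erase i, MvPolynomial.X t := by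
              have hsum1 : ∑ t ∈ fv n ((j : ℕ) + 1),
                    MvPolynomial.aeval f (MvPolynomial.X t : MvPolynomial (Fin n) ℤ)
                  = ∑ t ∈ fv n ((j : ℕ) + 1),
                    (if t = i then 0 else MvPolynomial.X t : MvPolynomial (Fin n) ℤ) := by
                refine Finset.sum_congr rfl fun t _ => ?_
                rw [MvPolynomial.aeval_X]
              rw [hsum1,
                ← Finset.sum_erase (fv n ((j : ℕ) + 1)) (a := i)
                  (f := fun t => if t = i then (0 : MvPolynomial (Fin n) ℤ)
                    else MvPolynomial.X t) (by simp)]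
              refine Finset.sum_congr rfl fun t ht => ?_
              rw [if_neg (Finset.mem_erase.mp ht).1]
            rw [hsum]
            simp only [hf]
            rw [if_neg hji]
          rw [heq]; exact Ideal.subset_span ⟨j, rfl⟩
    have hG'struct : ∀ j, ∃ r, G' j = MvPolynomial.X j ^ D' j + r ∧ degreeOf j r < D' j ∧
        ∀ i' : Fin n, (j : ℕ) < (i' : ℕ) → degreeOf i' (G' j) = 0 := by
      intro j
      by_cases hj : (j : ℕ) + 1 < k
      · simpa only [hG', hD', if_pos hj] using hh_struct (k - (j : ℕ)) (by omega) j
      · by_cases hji : j = i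
        · refine ⟨0, ?_, ?_, ?_⟩
          · simp only [hG', hD', if_neg hj, if_pos hji, pow_one, add_zero]
            rw [hji]
          · simp only [hD', if_neg hj, if_pos hji]
            rw [degreeOf_zero]; omega
          · intro i' hi'
            simp only [hG', if_neg hj, if_pos hji]
            have hval : (j : ℕ) = (i : ℕ) := by rw [hji]
            have hne : i' ≠ i := by
              intro h
              rw [h] at hi'
              omega
            rw [degreeOf_X, if_neg hne]
        · have hmem : j ∈ (fv n ((j : ℕ) + 1)).erase i := Finset.mem_erase.mpr ⟨hji, hfvj j⟩
          have := sticky_struct j ((fv n ((j : ℕ) + 1)).erase i) hmem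
            (fun t ht => hfvle j t (Finset.mem_erase.mp ht).2)
          simpa only [hG', hD', if_neg hj, if_neg hji] using this
    have hNmem : MvPolynomial.aeval f N ∈ Ideal.span (Set.range G') := by
      have h1 : N - MvPolynomial.monomial d 1 ∈ Ideal.span (Set.range G) := by
        have := Submodule.neg_mem _ hcong
        rwa [neg_sub] at this
      have h2 := aeval_span_le f G G' hGmap _ h1
      have h3 : MvPolynomial.aeval f (MvPolynomial.monomial d (1 : ℤ)) = 0 :=
        aeval_monomial_kill f d i hdi (by simp [hf])
      rw [show N = (N - MvPolynomial.monomial d 1) + MvPolynomial.monomial d 1 from by ring,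
        map_add, h3, add_zero]
      exact h2
    have hNstd : ∀ j, degreeOf j (MvPolynomial.aeval f N) < D' j := by
      intro j
      rw [hfN]
      refine (degreeOf_lt_iff (lt_of_lt_of_le Nat.zero_lt_one (hD'1 j))).mpr ?_
      intro dd hdd
      have hdd' := support_filter_sum _ N hdd
      rw [Finset.mem_filter] at hdd'
      by_cases hji : j = i
      · subst hji
        rw [hdd'.2]
        exact lt_of_lt_of_le Nat.zero_lt_one (hD'1 j)
      · have h1 := hstd dd hdd'.1 j
        simp only [hD']
        by_cases hj : (j : ℕ) + 1 < k
        · rw [if_pos hj] at h1 ⊢; omega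
        · rw [if_neg hj, if_neg hji]; rw [if_neg hj] at h1; omega
    have hzero : MvPolynomial.aeval f N = 0 := indep n G' D' hD'1 hG'struct _ hNmem hNstd
    have hc : MvPolynomial.coeff d' (MvPolynomial.aeval f N) = N.coeff d' := by
      rw [hfN, coeff_filter_sum, if_pos h0]
    rw [hzero, MvPolynomial.coeff_zero] at hc
    exact (MvPolynomial.mem_support_iff.mp hd') hc.symm
  · -- Part 2
    intro hall d' hd' i hik
    by_contra h0
    set f : Fin n → MvPolynomial (Fin n) ℤ :=
      fun t => if k ≤ (t : ℕ) + 1 then 0 else MvPolynomial.X t with hf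
    set p : (Fin n →₀ ℕ) → Prop := fun dd => ∀ t : Fin n, k ≤ (t : ℕ) + 1 → dd t = 0 with hp
    have hkeep : ∀ dd, p dd →
        MvPolynomial.aeval f (MvPolynomial.monomial dd (1 : ℤ)) = MvPolynomial.monomial dd 1 := by
      intro dd hdd
      refine aeval_monomial_keep f dd fun t ht => ?_
      have h1 : ¬ (k ≤ (t : ℕ) + 1) := by
        intro hs; exact (Finsupp.mem_support_iff.mp ht) (hdd t hs)
      simp only [hf]; rw [if_neg h1]
    have hkill : ∀ dd, ¬ p dd →
        MvPolynomial.aeval f (MvPolynomial.monomial dd (1 : ℤ)) = 0 := by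
      intro dd hdd
      simp only [hp] at hdd
      push_neg at hdd
      obtain ⟨t, ht, htne⟩ := hdd
      exact aeval_monomial_kill f dd t htne (by simp [hf, ht])
    have hfN := aeval_filter f p hkeep hkill N
    have hGmap : ∀ j : Fin n, MvPolynomial.aeval f (G j) ∈ Ideal.span (Set.range G) := by
      intro j
      by_cases hj : (j : ℕ) + 1 < k
      · have heq : MvPolynomial.aeval f (G j) = G j := by
          simp only [hG, if_pos hj]
          refine aeval_hh _ _ _ fun t ht => ?_
          have h1 : ¬ (k ≤ (t : ℕ) + 1) := by have := hfvle j t ht; omega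
          simp only [hf]; rw [if_neg h1]
        rw [heq]; exact Ideal.subset_span ⟨j, rfl⟩
      · have heq : MvPolynomial.aeval f (G j) = 0 := by
          simp only [hG, if_neg hj]
          rw [map_mul, MvPolynomial.aeval_X]
          simp only [hf]
          rw [if_pos (by omega), zero_mul]
        rw [heq]; exact Ideal.zero_mem _
    have hMfix : MvPolynomial.aeval f (MvPolynomial.monomial d (1 : ℤ))
        = MvPolynomial.monomial d 1 := by
      refine aeval_monomial_keep f d fun t ht => ?_
      have h1 : ¬ (k ≤ (t : ℕ) + 1) := by
        intro hs
        exact (Finsupp.mem_support_iff.mp ht) (hall t hs)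
      simp only [hf]; rw [if_neg h1]
    have hPmem : N - MvPolynomial.aeval f N ∈ Ideal.span (Set.range G) := by
      have h1 := aeval_span_le f G G hGmap _ hcong
      rw [map_sub, hMfix] at h1
      have h2 : N - MvPolynomial.aeval f N
          = (MvPolynomial.monomial d 1 - MvPolynomial.aeval f N)
            - (MvPolynomial.monomial d 1 - N) := by ring
      rw [h2]; exact Ideal.sub_mem _ h1 hcong
    have hPstd : ∀ j, degreeOf j (N - MvPolynomial.aeval f N) < D j := by
      intro j
      refine (degreeOf_lt_iff (lt_of_lt_of_le Nat.zero_lt_one (hD1 j))).mpr ?_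
      intro dd hdd
      have hddN : dd ∈ N.support := by
        by_contra hnot
        rw [MvPolynomial.mem_support_iff, not_not] at hnot
        have hφ : MvPolynomial.coeff dd (MvPolynomial.aeval f N) = 0 := by
          rw [hfN, coeff_filter_sum]
          split
          · exact hnot
          · rfl
        rw [MvPolynomial.mem_support_iff, MvPolynomial.coeff_sub, hnot, hφ, sub_zero] at hdd
        exact hdd rfl
      exact hsupN dd hddN j
    have hPzero : N - MvPolynomial.aeval f N = 0 := indep n G D hD1 hGstruct _ hPmem hPstd
    have hNeq : N = MvPolynomial.aeval f N := by rwa [sub_eq_zero] at hPzero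
    have hcoeff : MvPolynomial.coeff d' (MvPolynomial.aeval f N) = 0 := by
      rw [hfN, coeff_filter_sum, if_neg]
      intro hpd'
      exact h0 (hpd' i hik)
    rw [← hNeq] at hcoeff
    exact (MvPolynomial.mem_support_iff.mp hd') hcoeff
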